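/- The polynomial identity f'(t) = (r-1)(1+t)^p/((1+qt)^3(1+t)^3)·(a₁t⁴ + b₁t³ + c₁t² + d₁t + e₁) holds for the fiber scalar curvature f, where a₁ = (r-2)(p-1)q³ and e₁ = (p² − pq − q² − 2p)(r+2). In particular, if f is constant then (r-2)(p-1)q³ = 0 and (p² − pq − q² − 2p)(r+2) = 0. -/

import Mathlib

/-- Fiber scalar curvature of the generalized Cheeger–Gromoll metric `h_{p,q}`
on a rank-`r` Euclidean vector bundle, as a function of `t = |a|^2`. -/
noncomputable def fiberScal (r p q t : ℝ) : ℝ :=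
  (r - 1) * (1 + t) ^ p / ((1 + q * t) ^ 2 * (1 + t) ^ 2) *
    (q ^ 2 * (r - 2) * t ^ 3
      + (q * ((2 - r) * p ^ 2 + 2 * (r - 3) * p + 2 * (r - 2) * q + r)) * t ^ 2
      + ((2 - r) * p ^ 2 + 2 * (r - 1) * p * q + (r - 2) * q ^ 2
          + 2 * (r - 2) * p + 2 * r * q) * t
      + r * (2 * p + q))


set_option maxHeartbeats 2000000 in
theorem stmt_5 (r : ℕ) (hr : 2 ≤ r) (p q : ℝ) (hq : 0 ≤ q) :
    (∀ t ≥ (0 : ℝ),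
      HasDerivAt (fiberScal (r : ℝ) p q)
        (((r : ℝ) - 1) * (1 + t) ^ p / ((1 + q * t) ^ 3 * (1 + t) ^ 3) *
          ((((r : ℝ) - 2) * (p - 1) * q ^ 3) * t ^ 4
            + (-((r : ℝ) * p ^ 3 - 4 * r * p ^ 2 - 2 * p ^ 3 - 2 * r * p * q + 2 * r * p
                  + 10 * p ^ 2 + 3 * r * q + 4 * p * q + r - 10 * p - 6 * q + 2) * q ^ 2) * t ^ 3
            + (-2 * (r : ℝ) * p ^ 3 * q + 2 * r * p ^ 2 * q ^ 2 + r * p * q ^ 3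
                + 7 * r * p ^ 2 * q + 4 * p ^ 3 * q - 2 * r * p * q ^ 2 - 2 * p ^ 2 * q ^ 2
                - 3 * r * q ^ 3 - 2 * p * q ^ 3 - 5 * r * p * q - 16 * p ^ 2 * q
                - 3 * r * q ^ 2 + 2 * p * q ^ 2 + 6 * q ^ 3 + 12 * p * q - 6 * q ^ 2) * t ^ 2
            + (-(r : ℝ) * p ^ 3 + 3 * r * p ^ 2 * q - r * q ^ 3 + 3 * r * p ^ 2 + 2 * p ^ 3
                - 6 * r * p * q - 3 * r * q ^ 2 + 2 * q ^ 3 - 2 * r * p - 6 * p ^ 2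
                - 6 * p * q - 6 * q ^ 2 + 4 * p) * t
            + (p ^ 2 - p * q - q ^ 2 - 2 * p) * ((r : ℝ) + 2))) t) ∧
    ((∀ t ≥ (0 : ℝ), fiberScal (r : ℝ) p q t = fiberScal (r : ℝ) p q 0) →
      ((r : ℝ) - 2) * (p - 1) * q ^ 3 = 0 ∧
      (p ^ 2 - p * q - q ^ 2 - 2 * p) * ((r : ℝ) + 2) = 0) := by
  have hR : (2:ℝ) ≤ (r:ℝ) := by exact_mod_cast hr
  have main : ∀ t ≥ (0 : ℝ),
      HasDerivAt (fiberScal (r : ℝ) p q)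
        (((r : ℝ) - 1) * (1 + t) ^ p / ((1 + q * t) ^ 3 * (1 + t) ^ 3) *
          ((((r : ℝ) - 2) * (p - 1) * q ^ 3) * t ^ 4
            + (-((r : ℝ) * p ^ 3 - 4 * r * p ^ 2 - 2 * p ^ 3 - 2 * r * p * q + 2 * r * p
                  + 10 * p ^ 2 + 3 * r * q + 4 * p * q + r - 10 * p - 6 * q + 2) * q ^ 2) * t ^ 3
            + (-2 * (r : ℝ) * p ^ 3 * q + 2 * r * p ^ 2 * q ^ 2 + r * p * q ^ 3
                + 7 * r * p ^ 2 * q + 4 * p ^ 3 * q - 2 * r * p * q ^ 2 - 2 * p ^ 2 * q ^ 2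
                - 3 * r * q ^ 3 - 2 * p * q ^ 3 - 5 * r * p * q - 16 * p ^ 2 * q
                - 3 * r * q ^ 2 + 2 * p * q ^ 2 + 6 * q ^ 3 + 12 * p * q - 6 * q ^ 2) * t ^ 2
            + (-(r : ℝ) * p ^ 3 + 3 * r * p ^ 2 * q - r * q ^ 3 + 3 * r * p ^ 2 + 2 * p ^ 3
                - 6 * r * p * q - 3 * r * q ^ 2 + 2 * q ^ 3 - 2 * r * p - 6 * p ^ 2
                - 6 * p * q - 6 * q ^ 2 + 4 * p) * t
            + (p ^ 2 - p * q - q ^ 2 - 2 * p) * ((r : ℝ) + 2))) t := by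
    intro t ht
    have h1 : (0:ℝ) < 1 + t := by linarith
    have h2 : (0:ℝ) < 1 + q * t := by nlinarith [mul_nonneg hq ht]
    set R := (r:ℝ) with hRdef
    set c3 : ℝ := q ^ 2 * (R - 2) with hc3
    set c2 : ℝ := q * ((2 - R) * p ^ 2 + 2 * (R - 3) * p + 2 * (R - 2) * q + R) with hc2
    set c1 : ℝ := (2 - R) * p ^ 2 + 2 * (R - 1) * p * q + (R - 2) * q ^ 2
          + 2 * (R - 2) * p + 2 * R * q with hc1
    set c0 : ℝ := R * (2 * p + q) with hc0
    have hu : HasDerivAt (fun s : ℝ => (1 + s) ^ p) (1 * p * (1 + t) ^ (p - 1)) t :=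
      ((hasDerivAt_id t).const_add 1).rpow_const (Or.inl h1.ne')
    have hP : HasDerivAt (fun s : ℝ => c3 * s ^ 3 + c2 * s ^ 2 + c1 * s + c0)
        (c3 * (3 * t ^ 2) + c2 * (2 * t) + c1) t := by
      have h3 : HasDerivAt (fun s : ℝ => s ^ 3) (3 * t ^ 2) t := by
        simpa using hasDerivAt_pow 3 t
      have h2' : HasDerivAt (fun s : ℝ => s ^ 2) (2 * t) t := by
        simpa using hasDerivAt_pow 2 t
      have := (((h3.const_mul c3).add (h2'.const_mul c2)).add
        ((hasDerivAt_id t).const_mul c1)).add_const c0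
      simpa using this
    have hn : HasDerivAt
        (fun s : ℝ => (R - 1) * ((1 + s) ^ p * (c3 * s ^ 3 + c2 * s ^ 2 + c1 * s + c0)))
        ((R - 1) * (1 * p * (1 + t) ^ (p - 1) * (c3 * t ^ 3 + c2 * t ^ 2 + c1 * t + c0)
          + (1 + t) ^ p * (c3 * (3 * t ^ 2) + c2 * (2 * t) + c1))) t :=
      (hu.mul hP).const_mul (R - 1)
    have ha : HasDerivAt (fun s : ℝ => (1 + q * s) ^ 2) (2 * (1 + q * t) * q) t := by
      have := (((hasDerivAt_id t).const_mul q).const_add 1).fun_pow 2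
      simpa using this
    have hb : HasDerivAt (fun s : ℝ => (1 + s) ^ 2) (2 * (1 + t)) t := by
      have := ((hasDerivAt_id t).const_add 1).fun_pow 2
      simpa using this
    have hd : HasDerivAt (fun s : ℝ => (1 + q * s) ^ 2 * (1 + s) ^ 2)
        (2 * (1 + q * t) * q * (1 + t) ^ 2 + (1 + q * t) ^ 2 * (2 * (1 + t))) t :=
      ha.mul hb
    have hdne : ((1 + q * t) ^ 2 * (1 + t) ^ 2) ≠ 0 := by positivity
    have hdiv := hn.div hd hdne
    have hfun : fiberScal R p q = fun s : ℝ =>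
        (R - 1) * ((1 + s) ^ p * (c3 * s ^ 3 + c2 * s ^ 2 + c1 * s + c0)) /
          ((1 + q * s) ^ 2 * (1 + s) ^ 2) := by
      funext s
      unfold fiberScal
      rw [hc3, hc2, hc1, hc0]
      ring
    rw [hfun]
    convert hdiv using 1
    case e'_4 => rfl
    case e'_5 => rfl
    case e'_8 => rfl
    rw [Real.rpow_sub h1, Real.rpow_one]
    rw [hc3, hc2, hc1, hc0]
    field_simp
    ring
  refine ⟨main, fun hconst => ?_⟩
  have hQ : ∀ t : ℝ, 0 < t →
      (((r : ℝ) - 2) * (p - 1) * q ^ 3) * t ^ 4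
        + (-((r : ℝ) * p ^ 3 - 4 * r * p ^ 2 - 2 * p ^ 3 - 2 * r * p * q + 2 * r * p
              + 10 * p ^ 2 + 3 * r * q + 4 * p * q + r - 10 * p - 6 * q + 2) * q ^ 2) * t ^ 3
        + (-2 * (r : ℝ) * p ^ 3 * q + 2 * r * p ^ 2 * q ^ 2 + r * p * q ^ 3
            + 7 * r * p ^ 2 * q + 4 * p ^ 3 * q - 2 * r * p * q ^ 2 - 2 * p ^ 2 * q ^ 2
            - 3 * r * q ^ 3 - 2 * p * q ^ 3 - 5 * r * p * q - 16 * p ^ 2 * q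
            - 3 * r * q ^ 2 + 2 * p * q ^ 2 + 6 * q ^ 3 + 12 * p * q - 6 * q ^ 2) * t ^ 2
        + (-(r : ℝ) * p ^ 3 + 3 * r * p ^ 2 * q - r * q ^ 3 + 3 * r * p ^ 2 + 2 * p ^ 3
            - 6 * r * p * q - 3 * r * q ^ 2 + 2 * q ^ 3 - 2 * r * p - 6 * p ^ 2
            - 6 * p * q - 6 * q ^ 2 + 4 * p) * t
        + (p ^ 2 - p * q - q ^ 2 - 2 * p) * ((r : ℝ) + 2) = 0 := by
    intro t ht
    have h1 : (0:ℝ) < 1 + t := by linarith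
    have h2 : (0:ℝ) < 1 + q * t := by nlinarith [mul_nonneg hq ht.le]
    have hzero : HasDerivAt (fiberScal (r : ℝ) p q) 0 t := by
      have hev : fiberScal (r : ℝ) p q =ᶠ[nhds t]
          fun _ => fiberScal (r : ℝ) p q 0 := by
        filter_upwards [eventually_gt_nhds ht] with s hs
        exact hconst s hs.le
      exact (hasDerivAt_const t (fiberScal (r : ℝ) p q 0)).congr_of_eventuallyEq hev
    have heq := (main t ht.le).unique hzero
    have hfac : (0:ℝ) < ((r : ℝ) - 1) * (1 + t) ^ p / ((1 + q * t) ^ 3 * (1 + t) ^ 3) := by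
      have hrp : (0:ℝ) < (r:ℝ) - 1 := by linarith
      positivity
    rcases mul_eq_zero.mp heq with h | h
    · exact absurd h hfac.ne'
    · exact h
  have e1 := hQ 1 one_pos
  have e2 := hQ 2 two_pos
  have e3 := hQ 3 (by norm_num)
  have e4 := hQ 4 (by norm_num)
  have e5 := hQ 5 (by norm_num)
  norm_num at e1 e2 e3 e4 e5
  constructor <;> nlinarith [e1, e2, e3, e4, e5]
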